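/- Let K be a field and let λ ∈ K be a nonzero element that is not a root of unity (i.e., λ^n ≠ 1 for every integer n ≥ 1). Then there exists an absolute value v on the smallest subfield of K containing λ (a map to ℝ that is multiplicative, vanishes exactly at 0, and satisfies the triangle inequality) such that v(λ) ≠ 1. -/

import Mathlib

open scoped NNReal
open Polynomial IsDedekindDomain IsDedekindDomain.HeightOneSpectrum UniqueFactorizationMonoid
open IntermediateField

noncomputable section

/-- Pull back an absolute value along an injective ring hom. -/
def AbsoluteValue.pullback {F F' : Type*} [Field F] [Field F'] (φ : F →+* F')
    (v : AbsoluteValue F' ℝ) : AbsoluteValue F ℝ where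
  toFun x := v (φ x)
  map_mul' x y := by simp [map_mul]
  nonneg' x := v.nonneg _
  eq_zero' x := by
    rw [v.eq_zero, map_eq_zero_iff φ φ.injective]
  add_le' x y := by simpa using v.add_le (φ x) (φ y)

/-- Absolute value attached to a `ℤₘ₀`-valued valuation. -/
def absOfValuation {F : Type*} [Field F] (w : Valuation F (WithZero (Multiplicative ℤ))) :
    AbsoluteValue F ℝ where
  toFun x := ((WithZeroMulInt.toNNReal (two_ne_zero) (w x) : ℝ≥0) : ℝ)
  map_mul' x y := by push_cast [map_mul]; ring
  nonneg' x := by positivity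
  eq_zero' x := by
    rw [NNReal.coe_eq_zero]
    constructor
    · intro h
      by_contra hx
      exact WithZeroMulInt.toNNReal_ne_zero two_ne_zero ((Valuation.ne_zero_iff w).2 hx) h
    · rintro rfl
      simp [WithZeroMulInt.toNNReal_pos_apply]
  add_le' x y := by
    have h := w.map_add x y
    have hmono := (WithZeroMulInt.toNNReal_strictMono (by norm_num : (1:ℝ≥0) < 2)).monotone
    have := hmono h
    have hmax : (WithZeroMulInt.toNNReal two_ne_zero (max (w x) (w y))) =
        max (WithZeroMulInt.toNNReal two_ne_zero (w x))
          (WithZeroMulInt.toNNReal two_ne_zero (w y)) := hmono.map_max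
    rw [hmax] at this
    have := NNReal.coe_le_coe.2 this
    refine this.trans ?_
    push_cast
    rw [max_le_iff]
    constructor <;> nlinarith [NNReal.coe_nonneg (WithZeroMulInt.toNNReal two_ne_zero (w x)),
      NNReal.coe_nonneg (WithZeroMulInt.toNNReal two_ne_zero (w y))]

theorem absOfValuation_ne_one {F : Type*} [Field F]
    (w : Valuation F (WithZero (Multiplicative ℤ))) {x : F} (hx : w x ≠ 1) :
    absOfValuation w x ≠ 1 := by
  intro h
  apply hx
  have hinj := (WithZeroMulInt.toNNReal_strictMono (by norm_num : (1:ℝ≥0) < 2)).injective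
  have h' : ((WithZeroMulInt.toNNReal (two_ne_zero) (w x) : ℝ≥0) : ℝ) = 1 := h
  have : (WithZeroMulInt.toNNReal (two_ne_zero) (w x) : ℝ≥0) = 1 := by
    exact_mod_cast h'
  have h1 : (WithZeroMulInt.toNNReal (two_ne_zero (α := ℝ≥0)) (1 : WithZero (Multiplicative ℤ))) = 1 :=
    map_one _
  exact hinj (this.trans h1.symm)

theorem AbsoluteValue.pullback_apply {F F' : Type*} [Field F] [Field F'] (φ : F →+* F')
    (v : AbsoluteValue F' ℝ) (x : F) : v.pullback φ x = v (φ x) := rfl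


theorem exists_valuation_ne_one {R F : Type*} [CommRing R] [IsDedekindDomain R] [Field F]
    [Algebra R F] [IsFractionRing R F] {x : F} (hx : x ∉ (algebraMap R F).range) :
    ∃ v : HeightOneSpectrum R, v.valuation F x ≠ 1 := by
  classical
  obtain ⟨⟨a, s⟩, rfl⟩ := IsLocalization.mk'_surjective (nonZeroDivisors R) x
  dsimp only at hx ⊢
  have hs0 : (s : R) ≠ 0 := nonZeroDivisors.coe_ne_zero s
  have ha0 : a ≠ 0 := by
    rintro rfl
    exact hx ⟨0, by rw [map_zero, IsLocalization.mk'_zero]⟩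
  have hnd : ¬ (s : R) ∣ a := by
    rintro ⟨c, rfl⟩
    refine hx ⟨c, ?_⟩
    exact (IsLocalization.mk'_mul_cancel_left (S := F) c s).symm
  have hspan : ¬ (Ideal.span {(s : R)} ∣ Ideal.span {a}) := by
    intro h
    exact hnd (Ideal.mem_span_singleton.mp (Ideal.le_of_dvd h
      (Ideal.mem_span_singleton.mpr dvd_rfl)))
  have hsb : Ideal.span {(s : R)} ≠ ⊥ := by
    simpa [Ideal.span_singleton_eq_bot] using hs0
  have hab : Ideal.span {a} ≠ ⊥ := by
    simpa [Ideal.span_singleton_eq_bot] using ha0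
  rw [dvd_iff_normalizedFactors_le_normalizedFactors hsb hab, Multiset.le_iff_count] at hspan
  push_neg at hspan
  obtain ⟨P, hP⟩ := hspan
  set m := Multiset.count P (normalizedFactors (Ideal.span {(s : R)})) with hm
  have hPmem : P ∈ normalizedFactors (Ideal.span {(s : R)}) := by
    rw [← Multiset.count_pos]
    omega
  have hPprime : Prime P := prime_of_normalized_factor P hPmem
  let v : HeightOneSpectrum R :=
    ⟨P, Ideal.isPrime_of_prime hPprime, hPprime.ne_zero⟩
  refine ⟨v, ?_⟩
  -- P ^ m divides (s)
  have hdvds : P ^ m ∣ Ideal.span {(s : R)} := by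
    have hle : Multiset.replicate m P ≤ normalizedFactors (Ideal.span {(s : R)}) :=
      Multiset.le_count_iff_replicate_le.mp le_rfl
    have := Multiset.prod_dvd_prod_of_le hle
    rwa [Multiset.prod_replicate, prod_normalizedFactors_eq_self hsb] at this
  -- P ^ m does not divide (a)
  have hndvda : ¬ P ^ m ∣ Ideal.span {a} := by
    intro h
    have hP0 : P ^ m ≠ 0 := pow_ne_zero _ hPprime.ne_zero
    rw [dvd_iff_normalizedFactors_le_normalizedFactors hP0 hab] at h
    have := (Multiset.le_iff_count.mp h) P
    rw [normalizedFactors_of_irreducible_pow hPprime.irreducible, normalize_eq,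
      Multiset.count_replicate_self] at this
    omega
  have hvs : v.intValuationDef (s : R) ≤ Multiplicative.ofAdd (-(m : ℤ)) :=
    (v.intValuation_le_pow_iff_dvd _ _).mpr hdvds
  have hva : ¬ v.intValuationDef a ≤ Multiplicative.ofAdd (-(m : ℤ)) := by
    intro h
    exact hndvda ((v.intValuation_le_pow_iff_dvd _ _).mp h)
  rw [not_le] at hva
  have hne : v.intValuationDef a ≠ v.intValuationDef (s : R) :=
    (lt_of_le_of_lt hvs hva).ne'
  rw [valuation_of_mk']
  rw [intValuation_apply, intValuation_apply]
  intro h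
  rw [div_eq_one_iff_eq (show v.intValuationDef (s : R) ≠ 0 from v.intValuation_ne_zero _ hs0)] at h
  exact hne h

theorem trans_case {K k : Type*} [Field K] [Field k] [Algebra k K] {l : K}
    (htr : Transcendental k l)
    (hcoef : ∀ a : k, algebraMap k K a ∈ Subfield.closure ({l} : Set K)) :
    ∃ v : AbsoluteValue (↥(Subfield.closure ({l} : Set K))) ℝ,
      v ⟨l, Subfield.subset_closure (Set.mem_singleton l)⟩ ≠ 1 := by
  set S := Subfield.closure ({l} : Set K) with hS
  have hinj : Function.Injective (Polynomial.aeval l : k[X] →ₐ[k] K) :=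
    (transcendental_iff_injective).mp htr
  set F' := FractionRing (k[X]) with hF'
  set ψ : F' →+* K := IsFractionRing.lift (g := (Polynomial.aeval l : k[X] →ₐ[k] K).toRingHom) hinj
    with hψ
  have hψa : ∀ p : k[X], ψ (algebraMap (k[X]) F' p) = Polynomial.aeval l p := fun p =>
    IsFractionRing.lift_algebraMap hinj p
  have hpoly : ∀ p : k[X], Polynomial.aeval l p ∈ S := by
    intro p
    induction p using Polynomial.induction_on' with
    | add p q hp hq => rw [map_add]; exact add_mem hp hq
    | monomial n a =>
      rw [Polynomial.aeval_monomial]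
      exact mul_mem (hcoef a) (pow_mem (Subfield.subset_closure (Set.mem_singleton l)) n)
  have hrange : ∀ z : F', ψ z ∈ S := by
    intro z
    obtain ⟨⟨p, q⟩, rfl⟩ := IsLocalization.mk'_surjective (nonZeroDivisors (k[X])) z
    dsimp only
    rw [IsFractionRing.mk'_eq_div, map_div₀, hψa, hψa]
    exact div_mem (hpoly p) (hpoly q)
  set ψ' : F' →+* S := ψ.codRestrict S.toSubring hrange with hψ'
  have hψ'inj : Function.Injective ψ' := fun a b h => ψ.injective (congrArg Subtype.val h)
  have hψ'surj : Function.Surjective ψ' := by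
    intro y
    have hsub : S ≤ ψ.fieldRange := by
      rw [hS]
      refine Subfield.closure_le.mpr ?_
      rintro t rfl
      exact ⟨algebraMap (k[X]) F' X, by rw [hψa, Polynomial.aeval_X]⟩
    obtain ⟨z, hz⟩ := hsub y.2
    exact ⟨z, Subtype.ext hz⟩
  set e := RingEquiv.ofBijective ψ' ⟨hψ'inj, hψ'surj⟩ with he
  have hx0 : (algebraMap (k[X]) F' X) ≠ 0 :=
    (map_ne_zero_iff _ (IsFractionRing.injective (k[X]) F')).mpr Polynomial.X_ne_zero
  have hy : (algebraMap (k[X]) F' X)⁻¹ ∉ (algebraMap (k[X]) F').range := by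
    rintro ⟨q, hq⟩
    have h1 : algebraMap (k[X]) F' (X * q) = 1 := by
      rw [map_mul, hq, mul_inv_cancel₀ hx0]
    have h2 : (X : k[X]) * q = 1 := by
      apply IsFractionRing.injective (k[X]) F'
      rw [h1, map_one]
    exact Polynomial.not_isUnit_X (IsUnit.of_mul_eq_one q h2)
  obtain ⟨v, hv⟩ := exists_valuation_ne_one hy
  have hvX : v.valuation F' (algebraMap (k[X]) F' X) ≠ 1 := by
    intro h
    apply hv
    rw [map_inv₀, h, inv_one]
  refine ⟨(absOfValuation (v.valuation F')).pullback (e.symm : S →+* F'), ?_⟩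
  have hex : e (algebraMap (k[X]) F' X) = ⟨l, Subfield.subset_closure (Set.mem_singleton l)⟩ := by
    apply Subtype.ext
    show ψ (algebraMap (k[X]) F' X) = l
    rw [hψa, Polynomial.aeval_X]
  rw [AbsoluteValue.pullback_apply]
  have : e.symm ⟨l, Subfield.subset_closure (Set.mem_singleton l)⟩ = algebraMap (k[X]) F' X := by
    rw [← hex, RingEquiv.symm_apply_apply]
  show absOfValuation (v.valuation F') (e.symm ⟨l, Subfield.subset_closure (Set.mem_singleton l)⟩) ≠ 1
  rw [this]
  exact absOfValuation_ne_one _ hvX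

/-- If `λ` is a nonzero element of a field `K` which is not a root of unity, then there is an
absolute value on the subfield of `K` generated by `λ` taking a value `≠ 1` at `λ`. -/
theorem exists_absoluteValue_ne_one_of_not_rootOfUnity
    {K : Type*} [Field K] (l : K) (hl : l ≠ 0)
    (hroot : ∀ n : ℕ, 1 ≤ n → l ^ n ≠ 1) :
    ∃ v : AbsoluteValue (↥(Subfield.closure ({l} : Set K))) ℝ,
      v ⟨l, Subfield.subset_closure (Set.mem_singleton l)⟩ ≠ 1 := by
  obtain ⟨p, hp⟩ := CharP.exists K
  rcases CharP.char_is_prime_or_zero K p with hprime | hzero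
  · -- characteristic p
    haveI := Fact.mk hprime
    haveI : NeZero p := ⟨hprime.ne_zero⟩
    letI : Algebra (ZMod p) K := ZMod.algebra K p
    by_cases halg : IsAlgebraic (ZMod p) l
    · exfalso
      haveI : FiniteDimensional (ZMod p) (ZMod p)⟮l⟯ :=
        IntermediateField.adjoin.finiteDimensional halg.isIntegral
      haveI : Finite ((ZMod p)⟮l⟯) := Module.finite_of_finite (ZMod p)
      haveI : Fintype ((ZMod p)⟮l⟯) := Fintype.ofFinite _
      set y : (ZMod p)⟮l⟯ := IntermediateField.AdjoinSimple.gen (ZMod p) l with hy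
      have hmap : algebraMap ((ZMod p)⟮l⟯) K y = l :=
        IntermediateField.AdjoinSimple.algebraMap_gen (ZMod p) l
      have hy0 : y ≠ 0 := by
        intro h
        apply hl
        rw [← hmap, h, map_zero]
      have hcard : 1 < Fintype.card ((ZMod p)⟮l⟯) := Fintype.one_lt_card
      have hpow := FiniteField.pow_card_sub_one_eq_one y hy0
      refine hroot (Fintype.card ((ZMod p)⟮l⟯) - 1) (by omega) ?_
      have := congrArg (algebraMap ((ZMod p)⟮l⟯) K) hpow
      rwa [map_pow, hmap, map_one] at this
    · refine trans_case halg ?_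
      intro a
      obtain ⟨m, rfl⟩ := ZMod.natCast_zmod_surjective a
      rw [map_natCast]
      exact natCast_mem _ m
  · -- characteristic zero
    subst hzero
    haveI : CharZero K := CharP.charP_to_charZero K
    by_cases halg : IsAlgebraic ℚ l
    · -- number field case
      set S := Subfield.closure ({l} : Set K) with hS
      set x : ↥S := ⟨l, Subfield.subset_closure (Set.mem_singleton l)⟩ with hxdef
      haveI : CharZero ↥S := (S.subtype).charZero
      let j : ↥S →ₐ[ℚ] K := (S.subtype).toRatAlgHom
      have hjinj : Function.Injective j := Subtype.val_injective
      have hjx : j x = l := rfl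
      have halg' : IsAlgebraic ℚ x := by
        obtain ⟨q, hq0, hql⟩ := halg
        refine ⟨q, hq0, ?_⟩
        apply hjinj
        rw [← Polynomial.aeval_algHom_apply, hjx, hql, map_zero]
      have hgen : ∀ y : ↥S, y ∈ Subfield.closure ({x} : Set ↥S) := by
        intro y
        have hmap : S ≤ Subfield.map S.subtype (Subfield.closure ({x} : Set ↥S)) := by
          conv_lhs => rw [hS]
          refine Subfield.closure_le.mpr ?_
          rintro t rfl
          exact ⟨x, Subfield.subset_closure rfl, rfl⟩
        obtain ⟨t, ht, htv⟩ := hmap y.2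
        have hty : t = y := Subtype.ext htv
        exact hty ▸ ht
      have htop : ℚ⟮x⟯ = (⊤ : IntermediateField ℚ ↥S) := by
        rw [eq_top_iff]
        intro y _
        have hle : Subfield.closure ({x} : Set ↥S) ≤ (ℚ⟮x⟯).toSubfield :=
          Subfield.closure_le.mpr (by
            rintro t rfl
            exact IntermediateField.mem_adjoin_simple_self ℚ x)
        exact hle (hgen y)
      haveI hfin : FiniteDimensional ℚ (ℚ⟮x⟯) :=
        IntermediateField.adjoin.finiteDimensional halg'.isIntegral
      haveI : FiniteDimensional ℚ ↥S := by
        have h2 : FiniteDimensional ℚ (⊤ : IntermediateField ℚ ↥S) := htop ▸ hfin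
        exact (IntermediateField.topEquiv (F := ℚ) (E := ↥S)).toLinearEquiv.finiteDimensional
      haveI : NumberField ↥S :=
        { to_charZero := inferInstance, to_finiteDimensional := inferInstance }
      by_cases harch : ∀ φ : ↥S →+* ℂ, ‖φ x‖ = 1
      · have hxint : ¬ IsIntegral ℤ x := by
          intro hxi
          obtain ⟨n, hn, hxn⟩ :=
            NumberField.Embeddings.pow_eq_one_of_norm_eq_one (↥S) ℂ hxi harch
          refine hroot n hn ?_
          have hc := congrArg S.subtype hxn
          rwa [map_pow, map_one] at hc
        have hxr : x ∉ (algebraMap (NumberField.RingOfIntegers ↥S) ↥S).range := by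
          rintro ⟨c, hcx⟩
          exact hxint (hcx ▸ NumberField.RingOfIntegers.isIntegral_coe c)
        obtain ⟨v, hv⟩ := exists_valuation_ne_one hxr
        exact ⟨absOfValuation (v.valuation ↥S), absOfValuation_ne_one _ hv⟩
      · push_neg at harch
        obtain ⟨φ, hφ⟩ := harch
        refine ⟨(NormedField.toAbsoluteValue ℂ).pullback φ, ?_⟩
        rw [AbsoluteValue.pullback_apply]
        exact hφ
    · refine trans_case halg ?_
      intro a
      rw [eq_ratCast (algebraMap ℚ K) a]
      exact SubfieldClass.ratCast_mem _ a
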